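/- With q = exp(iπ/30), the sum [1]_q + [11]_q + [19]_q + [29]_q equals ½(3(5+√5) + √(150+66√5)), where [n]_q = sin(nπ/30)/sin(π/30). -/

import Mathlib

open Real

theorem stmt_12 (qd : ℕ → ℝ)
    (hqd : ∀ n, qd n = Real.sin (n * Real.pi / 30) / Real.sin (Real.pi / 30)) :
    qd 1 + qd 11 + qd 19 + qd 29
      = (1 / 2) * (3 * (5 + Real.sqrt 5) + Real.sqrt (150 + 66 * Real.sqrt 5)) := by
  have pi_pos := Real.pi_pos
  set t := Real.sqrt 5 with htdef
  set r := Real.sqrt 3 with hrdef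
  set a := Real.sin (Real.pi / 5) with hadef
  set s := Real.sin (Real.pi / 30) with hsdef
  have ht : t ^ 2 = 5 := Real.sq_sqrt (by norm_num)
  have hr : r ^ 2 = 3 := Real.sq_sqrt (by norm_num)
  have htpos : 0 < t := Real.sqrt_pos.mpr (by norm_num)
  have hrpos : 0 < r := Real.sqrt_pos.mpr (by norm_num)
  have hapos : 0 < a := Real.sin_pos_of_pos_of_lt_pi (by positivity) (by linarith)
  have hspos : 0 < s := Real.sin_pos_of_pos_of_lt_pi (by positivity) (by linarith)
  have hb : Real.cos (Real.pi / 5) = (1 + t) / 4 := Real.cos_pi_div_five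
  have ha2 : a ^ 2 = (10 - 2 * t) / 16 := by
    have h := Real.sin_sq_add_cos_sq (Real.pi / 5)
    rw [hb] at h
    nlinarith [ht]
  have hs : s = a * (r / 2) - ((1 + t) / 4) * (1 / 2) := by
    have h : Real.pi / 5 - Real.pi / 6 = Real.pi / 30 := by ring
    rw [hsdef, ← h, Real.sin_sub, Real.cos_pi_div_six, Real.sin_pi_div_six, hb]
  have hs11 : Real.sin (11 * Real.pi / 30) = a * (r / 2) + ((1 + t) / 4) * (1 / 2) := by
    have h : Real.pi / 5 + Real.pi / 6 = 11 * Real.pi / 30 := by ring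
    rw [← h, Real.sin_add, Real.cos_pi_div_six, Real.sin_pi_div_six, hb]
  have hu : Real.sqrt (150 + 66 * t) = 4 * r * a * (2 + t) := by
    have hsq : (150 + 66 * t : ℝ) = (4 * r * a * (2 + t)) ^ 2 := by
      linear_combination (-(16 * (4 + 4 * t + t ^ 2) * a ^ 2)) * hr +
        (-(48 * (4 + 4 * t + t ^ 2))) * ha2 + (-(3 * (10 - 2 * t))) * ht + 24 * ht
    rw [hsq, Real.sqrt_sq (by positivity)]
  have h29 : (29 : ℝ) * Real.pi / 30 = Real.pi - Real.pi / 30 := by ring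
  have h19 : (19 : ℝ) * Real.pi / 30 = Real.pi - 11 * Real.pi / 30 := by ring
  rw [hqd 1, hqd 11, hqd 19, hqd 29]
  push_cast
  rw [h29, h19, Real.sin_pi_sub, Real.sin_pi_sub]
  rw [show (1 : ℝ) * Real.pi / 30 = Real.pi / 30 from by ring]
  rw [hu, hs11, ← hsdef]
  have hsne : s ≠ 0 := ne_of_gt hspos
  field_simp
  linear_combination (16 - 4 * (3 * (5 + t) + 4 * r * a * (2 + t))) * hs +
    8 * ((r * a / 4 + 3 / 16) * ht - (2 + t) * a ^ 2 * hr - 3 * (2 + t) * ha2) + 3 * ht
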